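/- With the appendix construction (and Γ := n): the instance (ℙ,ℚ,Ψ) is a Yes-instance of ∀∃3CNF-SAT if and only if the constructed instance (𝕐,ℤ,ϝ,Γ) is a Yes-instance of ∀(Γ)∃CNF-SAT. (This is the correctness of the reduction proving Theorem 1 of the paper.) -/

import Mathlib

namespace Appendix

/-- Variables of the `∀∃3CNF-SAT` instance: `Sum.inl j` is `p_j ∈ ℙ`,
`Sum.inr j` is `q_j ∈ ℚ`. -/
abbrev PQ (n : ℕ) := Fin n ⊕ Fin n

/-- Variables of the constructed `∀(Γ)∃CNF-SAT` instance:
`𝕐 = {yP j, yN j}` and `ℤ = {z j} ∪ {sj j} ∪ {s}`. -/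
inductive NewVar (n : ℕ) where
  | yP : Fin n → NewVar n
  | yN : Fin n → NewVar n
  | z : Fin n → NewVar n
  | sj : Fin n → NewVar n
  | s : NewVar n
deriving DecidableEq

/-- A CNF formula, given as a list of clauses, each clause being a list of
literals (a variable with a polarity; `true` = positive literal).  An
assignment satisfies it if every clause contains a true literal. -/
def Satisfies {V : Type*} (F : List (List (V × Bool))) (a : V → Bool) : Prop :=
  ∀ C ∈ F, ∃ l ∈ C, a l.1 = l.2

/-- Translation of literals: `p_j ↦ yP j`, `¬p_j ↦ yN j` (both becoming
positive literals), `q_j ↦ z j`, `¬q_j ↦ ¬ z j`. -/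
def trLit {n : ℕ} : PQ n × Bool → NewVar n × Bool
  | (Sum.inl j, true) => (.yP j, true)
  | (Sum.inl j, false) => (.yN j, true)
  | (Sum.inr j, b) => (.z j, b)

/-- The formula `Ψ'` obtained from `Ψ` by translating every literal. -/
def Psi' {n : ℕ} (Ψ : List (List (PQ n × Bool))) : List (List (NewVar n × Bool)) :=
  Ψ.map fun C => C.map trLit

/-- The constructed formula `ϝ`: the clauses `(C'_i ∨ s)` for `i ∈ [m]`,
the clauses `(yP j ∨ ¬ sj j)` and `(yN j ∨ ¬ sj j)` for `j ∈ [n]`, and the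
clause `(¬ s ∨ sj 1 ∨ ⋯ ∨ sj n)`. -/
def digammaF {n : ℕ} (Ψ : List (List (PQ n × Bool))) : List (List (NewVar n × Bool)) :=
  (Ψ.map fun C => C.map trLit ++ [(NewVar.s, true)]) ++
  ((List.finRange n).map fun j => [(NewVar.yP j, true), (NewVar.sj j, false)]) ++
  ((List.finRange n).map fun j => [(NewVar.yN j, true), (NewVar.sj j, false)]) ++
  [(NewVar.s, false) :: (List.finRange n).map fun j => (NewVar.sj j, true)]

/-- The variable set `𝕐 = {yP j : j ∈ [n]} ∪ {yN j : j ∈ [n]}`. -/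
def Yset (n : ℕ) : Finset (NewVar n) :=
  Finset.univ.image NewVar.yP ∪ Finset.univ.image NewVar.yN

lemma mem_digammaF {n : ℕ} {Ψ : List (List (PQ n × Bool))} {C : List (NewVar n × Bool)} :
    C ∈ digammaF Ψ ↔
      (∃ C₀ ∈ Ψ, C = C₀.map trLit ++ [(NewVar.s, true)]) ∨
      (∃ j : Fin n, C = [(NewVar.yP j, true), (NewVar.sj j, false)]) ∨
      (∃ j : Fin n, C = [(NewVar.yN j, true), (NewVar.sj j, false)]) ∨
      C = (NewVar.s, false) :: (List.finRange n).map fun j => (NewVar.sj j, true) := by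
  simp [digammaF, List.mem_append, List.mem_map, eq_comm, or_assoc]

/-- Theorem 1 of the paper, correctness of the reduction.
Appendix construction with `Γ := n`: the instance `(ℙ,ℚ,Ψ)` is a Yes-instance
of `∀∃3CNF-SAT` if and only if the constructed instance `(𝕐,ℤ,ϝ,Γ)` is a
Yes-instance of `∀(Γ)∃CNF-SAT`. -/
theorem stmt5 (n : ℕ) (Ψ : List (List (PQ n × Bool)))
    (h3 : ∀ C ∈ Ψ, C.length = 3) (Γ : ℕ) (hΓ : Γ = n) :
    (∀ p : Fin n → Bool, ∃ q : Fin n → Bool, Satisfies Ψ (Sum.elim p q)) ↔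
    (∀ Y' ⊆ Yset n, Y'.card ≤ Γ →
      ∃ a : NewVar n → Bool, (∀ v ∈ Y', a v = false) ∧ Satisfies (digammaF Ψ) a) := by
  rw [hΓ]
  constructor
  · intro H Y' hYsub hYcard
    by_cases hall : ∀ j : Fin n, NewVar.yP j ∈ Y' ∨ NewVar.yN j ∈ Y'
    · -- exactly one of each pair; in particular not both
      have hnotboth : ∀ j : Fin n, ¬ (NewVar.yP j ∈ Y' ∧ NewVar.yN j ∈ Y') := by
        intro j ⟨hjP, hjN⟩
        set f : Fin n → NewVar n :=
          fun k => if NewVar.yP k ∈ Y' then NewVar.yP k else NewVar.yN k with hf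
        have hfinj : Function.Injective f := by
          intro k₁ k₂ hk
          simp only [hf] at hk
          split_ifs at hk <;> simp_all [NewVar.yP.injEq, NewVar.yN.injEq] <;> cases hk
        have hfsub : Finset.univ.image f ⊆ Y' := by
          intro v hv
          obtain ⟨k, -, rfl⟩ := Finset.mem_image.mp hv
          simp only [hf]
          split_ifs with h
          · exact h
          · exact (hall k).resolve_left h
        have hcard : (Finset.univ.image f).card = n := by
          rw [Finset.card_image_of_injective _ hfinj, Finset.card_univ, Fintype.card_fin]
        have hEq : Y' = Finset.univ.image f :=
          (Finset.eq_of_subset_of_card_le hfsub (by omega)).symm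
        have : NewVar.yN j ∈ Finset.univ.image f := hEq ▸ hjN
        obtain ⟨k, -, hk⟩ := Finset.mem_image.mp this
        simp only [hf] at hk
        split_ifs at hk with h
        cases hk
        exact h hjP
      set p : Fin n → Bool := fun j => decide (NewVar.yP j ∉ Y') with hp
      obtain ⟨q, hq⟩ := H p
      refine ⟨fun v => match v with
        | .yP j => decide (NewVar.yP j ∉ Y')
        | .yN j => decide (NewVar.yN j ∉ Y')
        | .z j => q j
        | .sj _ => false
        | .s => false, ?_, ?_⟩
      · intro v hv
        have := hYsub hv
        simp only [Yset, Finset.mem_union, Finset.mem_image] at this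
        rcases this with ⟨j, -, rfl⟩ | ⟨j, -, rfl⟩ <;> simpa using hv
      · intro C hC
        rcases mem_digammaF.mp hC with ⟨C₀, hC₀, rfl⟩ | ⟨j, rfl⟩ | ⟨j, rfl⟩ | rfl
        · obtain ⟨l, hl, hsat⟩ := hq C₀ hC₀
          refine ⟨trLit l, List.mem_append_left _ (List.mem_map_of_mem hl), ?_⟩
          obtain ⟨x | x, b⟩ := l
          · cases b
            · -- negative literal on p: p x = false means yP x ∈ Y', so yN x ∉ Y'
              simp only [Sum.elim_inl, hp, decide_eq_false_iff_not, not_not] at hsat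
              have : NewVar.yN x ∉ Y' := fun h => hnotboth x ⟨hsat, h⟩
              simp [trLit, this]
            · simp only [Sum.elim_inl, hp] at hsat
              simpa [trLit] using hsat
          · simpa [trLit] using hsat
        · exact ⟨(NewVar.sj j, false), by simp, rfl⟩
        · exact ⟨(NewVar.sj j, false), by simp, rfl⟩
        · exact ⟨(NewVar.s, false), by simp, rfl⟩
    · push_neg at hall
      obtain ⟨j, hjP, hjN⟩ := hall
      refine ⟨fun v => match v with
        | .yP k => decide (k = j)
        | .yN k => decide (k = j)
        | .z _ => false
        | .sj k => decide (k = j)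
        | .s => true, ?_, ?_⟩
      · intro v hv
        have := hYsub hv
        simp only [Yset, Finset.mem_union, Finset.mem_image] at this
        rcases this with ⟨k, -, rfl⟩ | ⟨k, -, rfl⟩ <;>
        · simp only [decide_eq_false_iff_not]
          rintro rfl
          first | exact hjP hv | exact hjN hv
      · intro C hC
        rcases mem_digammaF.mp hC with ⟨C₀, hC₀, rfl⟩ | ⟨k, rfl⟩ | ⟨k, rfl⟩ | rfl
        · exact ⟨(NewVar.s, true), by simp, rfl⟩
        · by_cases hk : k = j
          · exact ⟨(NewVar.yP k, true), by simp, by simp [hk]⟩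
          · exact ⟨(NewVar.sj k, false), by simp, by simp [hk]⟩
        · by_cases hk : k = j
          · exact ⟨(NewVar.yN k, true), by simp, by simp [hk]⟩
          · exact ⟨(NewVar.sj k, false), by simp, by simp [hk]⟩
        · exact ⟨(NewVar.sj j, true), by simp [List.mem_map], by simp⟩
  · intro H p
    set Y' : Finset (NewVar n) :=
      Finset.univ.image (fun j => if p j then NewVar.yN j else NewVar.yP j) with hY'
    have hYsub : Y' ⊆ Yset n := by
      intro v hv
      obtain ⟨k, -, rfl⟩ := Finset.mem_image.mp hv
      simp only [Yset, Finset.mem_union, Finset.mem_image]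
      split_ifs
      · exact Or.inr ⟨k, Finset.mem_univ k, rfl⟩
      · exact Or.inl ⟨k, Finset.mem_univ k, rfl⟩
    have hYcard : Y'.card ≤ n := by
      calc Y'.card ≤ Finset.univ.card := Finset.card_image_le
      _ = n := by simp
    obtain ⟨a, ha0, haS⟩ := H Y' hYsub hYcard
    have hmemP : ∀ j : Fin n, p j = false → a (NewVar.yP j) = false := by
      intro j hj
      apply ha0
      exact Finset.mem_image.mpr ⟨j, Finset.mem_univ j, by simp [hj]⟩
    have hmemN : ∀ j : Fin n, p j = true → a (NewVar.yN j) = false := by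
      intro j hj
      apply ha0
      exact Finset.mem_image.mpr ⟨j, Finset.mem_univ j, by simp [hj]⟩
    have hs : a NewVar.s = false := by
      by_contra hs
      rw [Bool.not_eq_false] at hs
      obtain ⟨l, hl, hlv⟩ := haS _ (mem_digammaF.mpr (Or.inr (Or.inr (Or.inr rfl))))
      rcases List.mem_cons.mp hl with rfl | hl
      · rw [hs] at hlv; cases hlv
      · obtain ⟨k, -, rfl⟩ := List.mem_map.mp hl
        -- a (sj k) = true; clauses force a (yP k) = a (yN k) = true
        have hP : a (NewVar.yP k) = true := by
          obtain ⟨l', hl', hlv'⟩ := haS _ (mem_digammaF.mpr (Or.inr (Or.inl ⟨k, rfl⟩)))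
          simp only [List.mem_cons, List.mem_singleton, List.not_mem_nil, or_false] at hl'
          rcases hl' with rfl | rfl
          · exact hlv'
          · rw [hlv] at hlv'; cases hlv'
        have hN : a (NewVar.yN k) = true := by
          obtain ⟨l', hl', hlv'⟩ := haS _ (mem_digammaF.mpr (Or.inr (Or.inr (Or.inl ⟨k, rfl⟩))))
          simp only [List.mem_cons, List.mem_singleton, List.not_mem_nil, or_false] at hl'
          rcases hl' with rfl | rfl
          · exact hlv'
          · rw [hlv] at hlv'; cases hlv'
        cases hp : p k
        · rw [hmemP k hp] at hP; cases hP
        · rw [hmemN k hp] at hN; cases hN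
    refine ⟨fun j => a (NewVar.z j), ?_⟩
    intro C hC
    obtain ⟨l, hl, hlv⟩ := haS _ (mem_digammaF.mpr (Or.inl ⟨C, hC, rfl⟩))
    rcases List.mem_append.mp hl with hl | hl
    · obtain ⟨l₀, hl₀, rfl⟩ := List.mem_map.mp hl
      refine ⟨l₀, hl₀, ?_⟩
      obtain ⟨x | x, b⟩ := l₀
      · cases b
        · simp only [trLit] at hlv
          have : p x = false := by
            by_contra h
            rw [Bool.not_eq_false] at h
            rw [hmemN x h] at hlv; cases hlv
          simp [this]
        · simp only [trLit] at hlv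
          have : p x = true := by
            by_contra h
            rw [Bool.not_eq_true] at h
            rw [hmemP x h] at hlv; cases hlv
          simp [this]
      · simpa [trLit] using hlv
    · simp only [List.mem_singleton] at hl
      subst hl
      rw [hs] at hlv; cases hlv

end Appendix
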